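/- Let k ≥ 2 be an integer and C_k > 0 a real. Suppose given reals t_1, …, t_k with 0 < t_1 ≤ t_2 ≤ ⋯ ≤ t_k, and for each i = 1, …, k−1 reals U_i > 0, α_i > 0, and β_i > 0. If 0 < C_k/t_k ≤ 1 − Σ_{i=1}^{k−1} U_i·(α_i + β_i)/∏_{j=i}^{k−1}(β_j·U_j + 1), then there exists an index j ∈ {1, …, k} such that C_k + Σ_{i=1}^{k−1} α_i·t_i·U_i + Σ_{i=1}^{j−1} β_i·t_i·U_i ≤ t_j. -/

import Mathlib

open Finset

noncomputable def k2uAux (a U b : ℕ → ℝ) : ℕ → ℝ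
  | 0 => 1
  | n+1 => (k2uAux a U b n - a (n+1) * U (n+1)) / (b (n+1) * U (n+1) + 1)

theorem k2u_general_form
    (k : ℕ) (hk : 2 ≤ k) (Ck : ℝ) (hCk : 0 < Ck)
    (t U a b : ℕ → ℝ)
    (ht1 : 0 < t 1)
    (hmono : ∀ i ∈ Finset.Icc 1 k, ∀ j ∈ Finset.Icc 1 k, i ≤ j → t i ≤ t j)
    (hU : ∀ i ∈ Finset.Icc 1 (k - 1), 0 < U i)
    (ha : ∀ i ∈ Finset.Icc 1 (k - 1), 0 < a i)
    (hb : ∀ i ∈ Finset.Icc 1 (k - 1), 0 < b i)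
    (hpos : 0 < Ck / t k)
    (hcond : Ck / t k ≤ 1 - ∑ i ∈ Finset.Icc 1 (k - 1),
      U i * (a i + b i) / (∏ j ∈ Finset.Icc i (k - 1), (b j * U j + 1))) :
    ∃ j ∈ Finset.Icc 1 k,
      Ck + (∑ i ∈ Finset.Icc 1 (k - 1), a i * t i * U i)
        + (∑ i ∈ Finset.Icc 1 (j - 1), b i * t i * U i) ≤ t j := by
  classical
  by_contra hcon
  push_neg at hcon
  set f : ℕ → ℝ := k2uAux a U b with hf
  have hfrec : ∀ n : ℕ, f (n+1) = (f n - a (n+1) * U (n+1)) / (b (n+1) * U (n+1) + 1) := by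
    intro n; rw [hf]; rfl
  have hf0 : f 0 = 1 := rfl
  have hDpos : ∀ i ∈ Icc 1 (k-1), 0 < b i * U i + 1 := by
    intro i hi
    have := hb i hi; have := hU i hi
    nlinarith
  -- closed form for f n
  have hclosed : ∀ n, n ≤ k - 1 →
      f n = 1 - ∑ i ∈ Icc 1 n, U i * (a i + b i) / ∏ j ∈ Icc i n, (b j * U j + 1) := by
    intro n
    induction n with
    | zero => intro _; simp [hf0]
    | succ m ih =>
      intro hm
      have hm' : m ≤ k - 1 := by omega
      have hmem : m + 1 ∈ Icc 1 (k-1) := by simp [mem_Icc]; omega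
      have hD : (0:ℝ) < b (m+1) * U (m+1) + 1 := hDpos _ hmem
      have hDne : (b (m+1) * U (m+1) + 1) ≠ 0 := ne_of_gt hD
      rw [hfrec, ih hm']
      rw [Finset.sum_Icc_succ_top (by omega : 1 ≤ m + 1)]
      have hprod : ∀ i ∈ Icc 1 m,
          U i * (a i + b i) / ∏ j ∈ Icc i (m+1), (b j * U j + 1)
            = (U i * (a i + b i) / ∏ j ∈ Icc i m, (b j * U j + 1)) / (b (m+1) * U (m+1) + 1) := by
        intro i hi
        have : i ≤ m + 1 := by simp [mem_Icc] at hi; omega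
        rw [Finset.prod_Icc_succ_top this, div_div]
      rw [Finset.sum_congr rfl hprod, ← Finset.sum_div]
      rw [Finset.Icc_self, Finset.prod_singleton]
      rw [← add_div, one_sub_div hDne]
      congr 1
      ring
  -- t k > 0
  have h1k : (1:ℕ) ∈ Icc 1 k := by simp [mem_Icc]; omega
  have hkk : k ∈ Icc 1 k := by simp [mem_Icc]; omega
  have htk : 0 < t k := lt_of_lt_of_le ht1 (hmono 1 h1k k hkk (by omega))
  have hL : f (k-1) = 1 - ∑ i ∈ Icc 1 (k-1),
      U i * (a i + b i) / ∏ j ∈ Icc i (k-1), (b j * U j + 1) := hclosed (k-1) le_rfl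
  have hLpos : 0 < f (k-1) := by rw [hL]; exact lt_of_lt_of_le hpos hcond
  have hLC : Ck ≤ f (k-1) * t k := by
    rw [hL]; rw [div_le_iff₀ htk] at hcond; linarith [hcond]
  -- positivity of f (j-1) for 1 ≤ j ≤ k
  have hfposm : ∀ m, m ≤ k - 1 → 0 < f (k - 1 - m) := by
    intro m
    induction m with
    | zero => intro _; simpa using hLpos
    | succ m ih =>
      intro hm
      have ihm : 0 < f (k - 1 - m) := ih (by omega)
      set i := k - 1 - (m+1) with hi
      have hik : k - 1 - m = i + 1 := by omega
      have hmem : i + 1 ∈ Icc 1 (k-1) := by simp [mem_Icc]; omega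
      have hD : (0:ℝ) < b (i+1) * U (i+1) + 1 := hDpos _ hmem
      have haU : (0:ℝ) < a (i+1) * U (i+1) :=
        mul_pos (ha _ hmem) (hU _ hmem)
      rw [hik, hfrec] at ihm
      rw [div_pos_iff] at ihm
      rcases ihm with ⟨h1, _⟩ | ⟨_, h2⟩
      · linarith
      · linarith
  have hfpos : ∀ j, 1 ≤ j → j ≤ k → 0 < f (j - 1) := by
    intro j h1 h2
    have := hfposm (k - j) (by omega)
    have e : k - 1 - (k - j) = j - 1 := by omega
    rwa [e] at this
  -- cleared recursion
  have hrec : ∀ i ∈ Icc 1 (k-1), f (i-1) - f i = a i * U i + b i * U i * f i := by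
    intro i hi
    obtain ⟨m, rfl⟩ : ∃ m, i = m + 1 := ⟨i - 1, by simp [mem_Icc] at hi; omega⟩
    have hD : (0:ℝ) < b (m+1) * U (m+1) + 1 := hDpos _ hi
    have h := hfrec m
    rw [eq_div_iff (ne_of_gt hD)] at h
    simp only [Nat.add_sub_cancel]
    nlinarith [h]
  -- weights
  set lam : ℕ → ℝ := fun j => if j = k then f (k-1) else f (j-1) - f j with hlam
  have hlam_lt : ∀ j ∈ Icc 1 (k-1), lam j = a j * U j + b j * U j * f j := by
    intro j hj
    have hjk : j ≠ k := by simp [mem_Icc] at hj; omega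
    rw [hlam]; simp only [hjk, if_false]
    exact hrec j hj
  have hlam_nonneg : ∀ j ∈ Icc 1 k, 0 ≤ lam j := by
    intro j hj
    simp [mem_Icc] at hj
    by_cases hjk : j = k
    · rw [hlam]; simp [hjk]; exact le_of_lt hLpos
    · have hj' : j ∈ Icc 1 (k-1) := by simp [mem_Icc]; omega
      rw [hlam_lt j hj']
      have hfj : 0 < f j := by
        have := hfpos (j+1) (by omega) (by omega)
        simpa using this
      have h1 := mul_pos (ha j hj') (hU j hj')
      have h2 := mul_pos (mul_pos (hb j hj') (hU j hj')) hfj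
      linarith
  -- telescoping
  have hinsert : ∀ i, i ≤ k - 1 → Icc (i+1) k = insert k (Icc (i+1) (k-1)) := by
    intro i hi
    ext x; simp [mem_Icc, mem_insert]; omega
  have hknotin : ∀ i, k ∉ Icc (i+1) (k-1) := by
    intro i; simp [mem_Icc]; omega
  have htel : ∀ i, i ≤ k - 1 → ∑ j ∈ Icc (i+1) k, lam j = f i := by
    intro i hi
    rw [hinsert i hi, Finset.sum_insert (hknotin i)]
    have h1 : ∀ j ∈ Icc (i+1) (k-1), lam j = f (j-1) - f j := by
      intro j hj
      have : j ≠ k := by simp [mem_Icc] at hj; omega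
      rw [hlam]; simp [this]
    rw [Finset.sum_congr rfl h1]
    have h2 : Icc (i+1) (k-1) = Ico (i+1) k := by
      rw [← Finset.Ico_add_one_right_eq_Icc]; congr 1; omega
    rw [h2, Finset.sum_Ico_eq_sum_range]
    have h3 : ∀ m ∈ Finset.range (k - (i+1)),
        f (i + 1 + m - 1) - f (i + 1 + m) = (fun m => f (i + m)) m - (fun m => f (i + m)) (m+1) := by
      intro m _
      have e1 : i + 1 + m - 1 = i + m := by omega
      have e2 : i + 1 + m = i + (m + 1) := by omega
      rw [e1, e2]
    rw [Finset.sum_congr rfl h3, Finset.sum_range_sub' (fun m => f (i + m))]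
    have e4 : i + (k - (i+1)) = k - 1 := by omega
    simp only [Nat.add_zero, e4]
    rw [hlam]; simp
  have htel0 : ∑ j ∈ Icc 1 k, lam j = 1 := by
    have := htel 0 (by omega)
    simpa [hf0] using this
  -- the failing inequalities
  set A : ℝ := ∑ i ∈ Icc 1 (k-1), a i * t i * U i with hA
  set B : ℕ → ℝ := fun j => ∑ i ∈ Icc 1 (j-1), b i * t i * U i with hB
  have hfail : ∀ j ∈ Icc 1 k, t j < Ck + A + B j := by
    intro j hj; exact hcon j hj
  have hlamk : lam k = f (k-1) := by rw [hlam]; simp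
  have hstrict : ∑ j ∈ Icc 1 k, lam j * t j < ∑ j ∈ Icc 1 k, lam j * (Ck + A + B j) := by
    apply Finset.sum_lt_sum
    · intro j hj
      exact mul_le_mul_of_nonneg_left (le_of_lt (hfail j hj)) (hlam_nonneg j hj)
    · exact ⟨k, hkk, by
        have := hfail k hkk
        have hlk : 0 < lam k := by rw [hlamk]; exact hLpos
        exact mul_lt_mul_of_pos_left this hlk⟩
  -- compute RHS
  have hswap : ∑ j ∈ Icc 1 k, lam j * B j
      = ∑ i ∈ Icc 1 (k-1), b i * t i * U i * f i := by
    rw [hB]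
    simp only []
    have h1 : ∀ j ∈ Icc 1 k, lam j * ∑ i ∈ Icc 1 (j-1), b i * t i * U i
        = ∑ i ∈ Icc 1 (j-1), lam j * (b i * t i * U i) := by
      intro j _; exact Finset.mul_sum _ _ _
    rw [Finset.sum_congr rfl h1]
    rw [Finset.sum_comm' (t' := Icc 1 (k-1)) (s' := fun i => Icc (i+1) k)
      (by intro x y; simp [mem_Icc]; omega)]
    apply Finset.sum_congr rfl
    intro i hi
    have hik : i ≤ k - 1 := by simp [mem_Icc] at hi; omega
    rw [← Finset.sum_mul, htel i hik]
    ring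
  have hRHS : ∑ j ∈ Icc 1 k, lam j * (Ck + A + B j)
      = Ck + A + ∑ i ∈ Icc 1 (k-1), b i * t i * U i * f i := by
    have : ∀ j ∈ Icc 1 k, lam j * (Ck + A + B j) = lam j * (Ck + A) + lam j * B j := by
      intro j _; ring
    rw [Finset.sum_congr rfl this, Finset.sum_add_distrib, ← Finset.sum_mul, htel0, hswap]
    ring
  -- compute LHS
  have hLHS : ∑ j ∈ Icc 1 k, lam j * t j
      = A + (∑ i ∈ Icc 1 (k-1), b i * t i * U i * f i) + f (k-1) * t k := by
    rw [hinsert 0 (by omega)]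
    simp only [Nat.zero_add]
    rw [Finset.sum_insert (hknotin 0), hlamk]
    have h1 : ∀ j ∈ Icc 1 (k-1), lam j * t j
        = a j * t j * U j + b j * t j * U j * f j := by
      intro j hj
      rw [hlam_lt j hj]; ring
    rw [Finset.sum_congr rfl h1, Finset.sum_add_distrib]
    rw [hA]; ring
  rw [hLHS, hRHS] at hstrict
  linarith
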